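/- The number of n×n matrices P over F_q with P² = P equals Σ_{j=0}^{n} γ_n / (γ_j · γ_{n-j}), where γ_m = |GL_m(F_q)| and γ_0 = 1. -/

import Mathlib

open Module Submodule LinearMap Finset

/-- The order of `GL_m(F_q)`. -/
def gma (q m : ℕ) : ℕ := ∏ i ∈ Finset.range m, (q ^ m - q ^ i)

attribute [local instance] Fintype.ofFinite

section aux

variable {F : Type} [Field F] [Fintype F] {n : ℕ}

lemma gma_pos {q m : ℕ} (hq : 1 < q) : 0 < gma q m := by
  apply Finset.prod_pos
  intro i hi
  have : q ^ i < q ^ m := Nat.pow_lt_pow_right hq (Finset.mem_range.1 hi)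
  omega

lemma gma_split {q : ℕ} (hq : 1 ≤ q) {j n : ℕ} (hj : j ≤ n) :
    gma q n = (∏ i ∈ Finset.range j, (q ^ n - q ^ i)) * (q ^ (j * (n - j)) * gma q (n - j)) := by
  unfold gma
  rw [← Finset.prod_range_mul_prod_Ico _ hj]
  congr 1
  rw [Finset.prod_Ico_eq_prod_range]
  have : ∀ i, q ^ n - q ^ (j + i) = q ^ j * (q ^ (n - j) - q ^ i) := by
    intro i
    rw [Nat.mul_sub, ← pow_add, ← pow_add, Nat.add_sub_cancel' hj]
  simp_rw [this]
  rw [Finset.prod_mul_distrib, Finset.prod_const, Finset.card_range, ← pow_mul]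

/-- Idempotent matrices correspond to idempotent endomorphisms. -/
noncomputable def matrixEquivEnd :
    {P : Matrix (Fin n) (Fin n) F // P * P = P} ≃
      {f : (Fin n → F) →ₗ[F] (Fin n → F) // f ∘ₗ f = f} :=
  (Matrix.toLinAlgEquiv' (R := F) (n := Fin n)).toEquiv.subtypeEquiv fun P => by
    show P * P = P ↔ Matrix.toLinAlgEquiv' P ∘ₗ Matrix.toLinAlgEquiv' P = Matrix.toLinAlgEquiv' P
    constructor
    · intro h
      rw [← Module.End.mul_eq_comp, ← map_mul, h]
    · intro h
      apply (Matrix.toLinAlgEquiv' (R := F) (n := Fin n)).injective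
      rw [map_mul, Module.End.mul_eq_comp, h]

/-- Idempotent endomorphisms correspond to pairs of complementary submodules. -/
noncomputable def endEquivSigma :
    {f : (Fin n → F) →ₗ[F] (Fin n → F) // f ∘ₗ f = f} ≃
      Σ p : Submodule F (Fin n → F), {q : Submodule F (Fin n → F) // IsCompl p q} := by
  refine Equiv.trans ?_ (Equiv.sigmaCongrRight fun p => (Submodule.isComplEquivProj p).symm)
  refine Equiv.trans (β := Σ p : Submodule F (Fin n → F),
      {f : (Fin n → F) →ₗ[F] (Fin n → F) // IsProj p f}) ?_
      (Equiv.sigmaCongrRight fun p => ?_)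
  · exact {
      toFun := fun f => ⟨range f.1, f.1, by
        constructor
        · intro x; exact mem_range_self f.1 x
        · rintro x ⟨y, rfl⟩
          rw [← comp_apply, f.2]⟩
      invFun := fun x => ⟨x.2.1, (isProj_iff_isIdempotentElem x.2.1).1 ⟨x.1, x.2.2⟩⟩
      left_inv := fun f => rfl
      right_inv := by
        rintro ⟨p, f, h⟩
        have hp : range f = p := by
          apply le_antisymm
          · rintro x ⟨y, rfl⟩; exact h.map_mem y
          · intro x hx; exact ⟨x, h.map_id x hx⟩
        subst hp
        rfl }
  · exact {
      toFun := fun f => ⟨f.2.codRestrict, f.2.codRestrict_apply_cod⟩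
      invFun := fun g => ⟨p.subtype ∘ₗ g.1, by
        constructor
        · intro x; exact (g.1 x).2
        · intro x hx
          show ((g.1 x : p) : Fin n → F) = x
          rw [show g.1 x = g.1 ((⟨x, hx⟩ : p) : Fin n → F) from rfl, g.2 ⟨x, hx⟩]⟩
      left_inv := fun f => Subtype.ext (by ext x; simp)
      right_inv := fun g => Subtype.ext (by ext x; simp) }

/-- The number of complements of a subspace. -/
lemma card_compl_submodule (p : Submodule F (Fin n → F)) :
    Nat.card {q : Submodule F (Fin n → F) // IsCompl p q} =
      Fintype.card F ^ (finrank F p * (n - finrank F p)) := by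
  classical
  rw [Nat.card_congr (Submodule.isComplEquivProj p)]
  obtain ⟨p', hp'⟩ := Submodule.exists_isCompl p
  haveI : Finite (↥p' →ₗ[F] ↥p) :=
    Finite.of_injective (fun f => (f : ↥p' → ↥p)) DFunLike.coe_injective
  set f0 : (Fin n → F) →ₗ[F] p := Submodule.projectionOnto p p' hp' with hf0
  set π' : (Fin n → F) →ₗ[F] p' := Submodule.projectionOnto p' p hp'.symm with hπ'
  have e : {f : (Fin n → F) →ₗ[F] p // ∀ x : p, f x = x} ≃ (↥p' →ₗ[F] ↥p) := {
    toFun := fun f => f.1 ∘ₗ p'.subtype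
    invFun := fun g => ⟨f0 + g ∘ₗ π', by
      intro x
      simp [hf0, hπ', Submodule.projectionOnto_apply_left hp' x,
        Submodule.projectionOnto_apply_of_mem_right hp'.symm x.2]⟩
    left_inv := by
      rintro ⟨f, hf⟩
      apply Subtype.ext
      apply LinearMap.ext_on_codisjoint hp'.codisjoint
      · intro x hx
        simp [hf0, hπ', Submodule.projectionOnto_apply_left hp' ⟨x, hx⟩,
          Submodule.projectionOnto_apply_of_mem_right hp'.symm hx, hf ⟨x, hx⟩]
      · intro x hx
        simp [hf0, hπ', Submodule.projectionOnto_apply_of_mem_right hp' hx,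
          Submodule.projectionOnto_apply_left hp'.symm ⟨x, hx⟩]
    right_inv := by
      intro g
      ext x
      simp [hf0, hπ', Submodule.projectionOnto_apply_right hp',
        Submodule.projectionOnto_apply_left hp'.symm x] }
  rw [Nat.card_congr e, Nat.card_eq_fintype_card, card_eq_pow_finrank (K := F),
    Module.finrank_linearMap]
  have h1 := Submodule.finrank_add_eq_of_isCompl hp'
  rw [Module.finrank_fintype_fun_eq_card, Fintype.card_fin] at h1
  have h2 : finrank F ↥p' = n - finrank F ↥p := by omega
  rw [h2, Nat.mul_comm]

lemma card_submodules (j : ℕ) (hj : j ≤ n) :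
    Nat.card {p : Submodule F (Fin n → F) // finrank F p = j} * gma (Fintype.card F) j =
      ∏ i ∈ Finset.range j, (Fintype.card F ^ n - Fintype.card F ^ i) := by
  classical
  have hV : finrank F (Fin n → F) = n := by
    rw [Module.finrank_fintype_fun_eq_card, Fintype.card_fin]
  have hL : Nat.card {s : Fin j → (Fin n → F) // LinearIndependent F s} =
      ∏ i ∈ Finset.range j, (Fintype.card F ^ n - Fintype.card F ^ i) := by
    rw [card_linearIndependent (K := F) (by rw [hV]; exact hj), hV,
      ← Fin.prod_univ_eq_prod_range]
  set φ : {s : Fin j → (Fin n → F) // LinearIndependent F s} →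
      {p : Submodule F (Fin n → F) // finrank F p = j} :=
    fun s => ⟨Submodule.span F (Set.range s.1), by
      rw [finrank_span_eq_card s.2, Fintype.card_fin]⟩ with hφ
  have fiberEquiv : ∀ p : {p : Submodule F (Fin n → F) // finrank F p = j},
      {x : {s : Fin j → (Fin n → F) // LinearIndependent F s} // φ x = p} ≃
        {t : Fin j → ↥p.1 // LinearIndependent F t} := by
    intro p
    refine {
      toFun := fun x => ⟨fun i => ⟨x.1.1 i, ?_⟩, ?_⟩
      invFun := fun t => ⟨⟨fun i => (t.1 i : Fin n → F),
        t.2.map' p.1.subtype (Submodule.ker_subtype p.1)⟩, ?_⟩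
      left_inv := fun x => Subtype.ext (Subtype.ext rfl)
      right_inv := fun t => Subtype.ext (funext fun i => Subtype.ext rfl) }
    · rw [← congrArg Subtype.val x.2]
      exact Submodule.subset_span (Set.mem_range_self i)
    · exact LinearIndependent.of_comp p.1.subtype x.1.2
    · apply Subtype.ext
      show Submodule.span F (Set.range fun i => ((t.1 i : Fin n → F))) = p.1
      have hsp : Submodule.span F (Set.range t.1) = ⊤ := by
        apply Submodule.eq_top_of_finrank_eq
        rw [finrank_span_eq_card t.2, Fintype.card_fin, p.2]
      have hr : (Set.range fun i => ((t.1 i : Fin n → F))) =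
          p.1.subtype '' Set.range t.1 := by
        rw [← Set.range_comp]; rfl
      rw [hr, Submodule.span_image, hsp, Submodule.map_top, Submodule.range_subtype]
  have key : ∀ p : {p : Submodule F (Fin n → F) // finrank F p = j},
      Nat.card {x : {s : Fin j → (Fin n → F) // LinearIndependent F s} // φ x = p} =
        gma (Fintype.card F) j := by
    intro p
    rw [Nat.card_congr (fiberEquiv p),
      card_linearIndependent (K := F) (V := ↥p.1) (by rw [p.2]), p.2]
    exact Fin.prod_univ_eq_prod_range (fun i => Fintype.card F ^ j - Fintype.card F ^ i) j
  rw [← hL, Nat.card_congr (Equiv.sigmaFiberEquiv φ).symm, Nat.card_eq_fintype_card,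
    Nat.card_eq_fintype_card, Fintype.card_sigma]
  have key' : ∀ p : {p : Submodule F (Fin n → F) // finrank F p = j},
      Fintype.card {x // φ x = p} = gma (Fintype.card F) j := fun p => by
    rw [← Nat.card_eq_fintype_card]; exact key p
  rw [Finset.sum_congr rfl fun p _ => key' p, Finset.sum_const, Finset.card_univ,
    smul_eq_mul]

end aux

/-- The number of `n × n` idempotent matrices (projections) over `F_q` equals
`Σ_{j=0}^{n} γ_n / (γ_j γ_{n-j})`. -/
theorem card_projections (q n : ℕ) (hn : 0 < n)
    (F : Type) [Field F] [Fintype F] (hF : Fintype.card F = q) :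
    (Nat.card {P : Matrix (Fin n) (Fin n) F // P * P = P} : ℚ) =
      ∑ j ∈ Finset.range (n + 1), (gma q n : ℚ) / (gma q j * gma q (n - j)) := by
  classical
  subst hF
  set q := Fintype.card F with hq'
  have hq : 1 < q := Fintype.one_lt_card
  have step : ∀ p : Submodule F (Fin n → F),
      Fintype.card {q' : Submodule F (Fin n → F) // IsCompl p q'} =
        q ^ (finrank F p * (n - finrank F p)) := fun p => by
    rw [← Nat.card_eq_fintype_card, card_compl_submodule]
  have hmap : ∀ p : Submodule F (Fin n → F), p ∈ Finset.univ →
      finrank F p ∈ Finset.range (n + 1) := by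
    intro p _
    rw [Finset.mem_range]
    have := p.finrank_le
    rw [Module.finrank_fintype_fun_eq_card, Fintype.card_fin] at this
    omega
  have main : Nat.card {P : Matrix (Fin n) (Fin n) F // P * P = P} =
      ∑ j ∈ Finset.range (n + 1),
        Nat.card {p : Submodule F (Fin n → F) // finrank F p = j} * q ^ (j * (n - j)) := by
    rw [Nat.card_congr (matrixEquivEnd.trans endEquivSigma), Nat.card_eq_fintype_card,
      Fintype.card_sigma, Finset.sum_congr rfl fun p _ => step p,
      ← Finset.sum_fiberwise_of_maps_to hmap
        (fun p => q ^ (finrank F p * (n - finrank F p)))]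
    refine Finset.sum_congr rfl fun j _ => ?_
    rw [Finset.sum_congr rfl
        (fun p hp => by rw [(Finset.mem_filter.1 hp).2] :
          ∀ p ∈ Finset.univ.filter fun p : Submodule F (Fin n → F) => finrank F p = j,
            q ^ (finrank F p * (n - finrank F p)) = q ^ (j * (n - j))),
      Finset.sum_const, smul_eq_mul]
    congr 1
    rw [Nat.card_eq_fintype_card, Fintype.card_subtype]
  rw [main]
  push_cast
  refine Finset.sum_congr rfl fun j hj => ?_
  have hjn : j ≤ n := by have := Finset.mem_range.1 hj; omega
  have h1 := card_submodules (F := F) (n := n) j hjn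
  have h2 := gma_split (le_of_lt hq) hjn
  have hgj : (gma q j : ℚ) ≠ 0 := Nat.cast_ne_zero.2 (gma_pos hq).ne'
  have hgnj : (gma q (n - j) : ℚ) ≠ 0 := Nat.cast_ne_zero.2 (gma_pos hq).ne'
  have h1' : (Nat.card {p : Submodule F (Fin n → F) // finrank F p = j} : ℚ) * gma q j =
      ((∏ i ∈ Finset.range j, (q ^ n - q ^ i) : ℕ) : ℚ) := by exact_mod_cast h1
  have h2' : (gma q n : ℚ) =
      ((∏ i ∈ Finset.range j, (q ^ n - q ^ i) : ℕ) : ℚ) *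
        ((q : ℚ) ^ (j * (n - j)) * gma q (n - j)) := by exact_mod_cast h2
  rw [eq_div_iff (mul_ne_zero hgj hgnj), h2', ← h1']
  ring
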